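/- (Tight composition of N Gaussian mechanisms via moments, as used by moments division.) Let N ≥ 1, σ > 0, and for each i ∈ {1,…,N} let vᵢ, vᵢ' ∈ ℝ^{pᵢ} with ‖vᵢ − vᵢ'‖₂ ≤ 1 (sensitivity-1 Gaussian mechanisms on two neighboring datasets). Let μᵢ be the law of vᵢ + Zᵢ and νᵢ the law of vᵢ' + Zᵢ, where Zᵢ has independent N(0, σ²) coordinates, and let μ = ⊗ᵢ μᵢ, ν = ⊗ᵢ νᵢ be the joint output distributions. Then for every real λ > 0, ε > 0, and δ ∈ (0,1) such that exp( N·λ(λ+1)/(2σ²) − λε ) ≤ δ, the measures μ and ν are (ε, δ)-indistinguishable: for every measurable set S, μ(S) ≤ e^ε·ν(S) + δ. In particular, the overall privacy loss of the composition grows with √N (through the moments) rather than linearly in N as under simple composition. -/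

import Mathlib

open MeasureTheory ProbabilityTheory Real NNReal ENNReal

theorem my_lintegral_pi_prod {n : ℕ} {E : Fin n → Type*} [∀ i, MeasurableSpace (E i)]
    (μ : ∀ i, Measure (E i)) [∀ i, SigmaFinite (μ i)] (f : ∀ i, E i → ENNReal)
    (hf : ∀ i, Measurable (f i)) :
    ∫⁻ x, ∏ i, f i (x i) ∂Measure.pi μ = ∏ i, ∫⁻ x, f i x ∂μ i := by
  induction n with
  | zero => simp [Measure.pi_empty_univ]
  | succ n ih =>
    have hmp := (measurePreserving_piFinSuccAbove μ 0)
    have hF : Measurable fun (z : E 0 × ∀ j : Fin n, E ((0 : Fin (n+1)).succAbove j)) =>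
        f 0 z.1 * ∏ j : Fin n, f ((0 : Fin (n+1)).succAbove j) (z.2 j) := by
      exact ((hf 0).comp measurable_fst).mul
        (Finset.measurable_prod _ fun j _ => (hf _).comp ((measurable_pi_apply j).comp measurable_snd))
    calc ∫⁻ x, ∏ i, f i (x i) ∂Measure.pi μ
        = ∫⁻ z : E 0 × ∀ j : Fin n, E ((0 : Fin (n+1)).succAbove j),
            f 0 z.1 * ∏ j : Fin n, f ((0 : Fin (n+1)).succAbove j) (z.2 j)
            ∂((μ 0).prod (Measure.pi fun j => μ ((0 : Fin (n+1)).succAbove j))) := by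
          rw [← hmp.lintegral_comp hF]
          congr 1 with x
          rw [Fin.prod_univ_succ]
          congr 1
        _ = (∫⁻ x, f 0 x ∂μ 0) * ∏ j : Fin n, ∫⁻ x, f _ x ∂μ ((0 : Fin (n+1)).succAbove j) := by
          rw [lintegral_prod_mul (f := f 0)
            (g := fun y : ∀ j : Fin n, E ((0 : Fin (n+1)).succAbove j) =>
              ∏ j : Fin n, f ((0 : Fin (n+1)).succAbove j) (y j)) (hf 0).aemeasurable
            (Finset.measurable_prod _ fun j _ => (hf _).comp (measurable_pi_apply j)).aemeasurable,
            ih (fun j => μ ((0 : Fin (n+1)).succAbove j)) _ (fun j => hf _)]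
        _ = ∏ i, ∫⁻ x, f i x ∂μ i := by rw [Fin.prod_univ_succ]; rfl

theorem my_pi_withDensity {n : ℕ} {E : Fin n → Type*} [∀ i, MeasurableSpace (E i)]
    (μ : ∀ i, Measure (E i)) [∀ i, SigmaFinite (μ i)] (f : ∀ i, E i → ENNReal)
    (hf : ∀ i, Measurable (f i)) [∀ i, SigmaFinite ((μ i).withDensity (f i))] :
    Measure.pi (fun i => (μ i).withDensity (f i))
      = (Measure.pi μ).withDensity (fun x => ∏ i, f i (x i)) := by
  refine Measure.pi_eq fun s hs => ?_
  rw [withDensity_apply _ (MeasurableSet.univ_pi hs)]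
  have key : ∀ x : ∀ i, E i, (Set.pi Set.univ s).indicator (fun x => ∏ i, f i (x i)) x
      = ∏ i, (s i).indicator (f i) (x i) := by
    intro x
    by_cases hx : x ∈ Set.pi Set.univ s
    · rw [Set.indicator_of_mem hx]
      exact Finset.prod_congr rfl fun i _ => (Set.indicator_of_mem (hx i trivial) _).symm
    · rw [Set.indicator_of_notMem hx]
      have : ∃ i, x i ∉ s i := by
        by_contra h
        push_neg at h
        exact hx fun i _ => h i
      obtain ⟨i, hi⟩ := this
      exact (Finset.prod_eq_zero (Finset.mem_univ i) (Set.indicator_of_notMem hi _)).symm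
  rw [← lintegral_indicator (MeasurableSet.univ_pi hs) (fun x => ∏ i, f i (x i))]
  simp_rw [key]
  rw [my_lintegral_pi_prod μ _ (fun i => (hf i).indicator (hs i))]
  exact Finset.prod_congr rfl fun i _ => by
    rw [lintegral_indicator (hs i), ← withDensity_apply _ (hs i)]

lemma my_gaussian_ratio (m m' : ℝ) {v : ℝ≥0} (hv : v ≠ 0) :
    gaussianReal m v = (gaussianReal m' v).withDensity
      (fun x => ENNReal.ofReal (rexp (((x - m') ^ 2 - (x - m) ^ 2) / (2 * v)))) := by
  have hv' : (0:ℝ) < v := lt_of_le_of_ne (v.coe_nonneg) (by exact_mod_cast hv.symm)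
  rw [gaussianReal_of_var_ne_zero _ hv, gaussianReal_of_var_ne_zero _ hv,
    ← withDensity_mul _ (measurable_gaussianPDF _ _) (by fun_prop)]
  congr 1
  ext x
  simp only [Pi.mul_apply, gaussianPDF, ← ENNReal.ofReal_mul (gaussianPDFReal_nonneg m' v x)]
  congr 1
  unfold gaussianPDFReal
  have h : rexp (-(x - m') ^ 2 / (2 * v)) * rexp (((x - m') ^ 2 - (x - m) ^ 2) / (2 * v))
      = rexp (-(x - m) ^ 2 / (2 * v)) := by
    rw [← Real.exp_add]
    congr 1
    field_simp
    ring
  rw [← h]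
  ring

lemma my_gaussian_moment (m m' : ℝ) {v : ℝ≥0} (hv : v ≠ 0) (c : ℝ) :
    ∫⁻ x, ENNReal.ofReal (rexp (c * ((x - m') ^ 2 - (x - m) ^ 2) / (2 * v)))
        ∂gaussianReal m' v
      = ENNReal.ofReal (rexp (c * (c - 1) * (m - m') ^ 2 / (2 * v))) := by
  have hv' : (0:ℝ) < v := lt_of_le_of_ne (v.coe_nonneg) (by exact_mod_cast hv.symm)
  set a : ℝ := c * (m - m') / v with ha
  set b : ℝ := -(c * (m ^ 2 - m' ^ 2) / (2 * v)) with hb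
  have key : ∀ x : ℝ, c * ((x - m') ^ 2 - (x - m) ^ 2) / (2 * v) = a * x + b := by
    intro x; rw [ha, hb]; field_simp; ring
  simp_rw [key]
  rw [gaussianReal_of_var_ne_zero _ hv,
    lintegral_withDensity_eq_lintegral_mul _ (measurable_gaussianPDF _ _) (by fun_prop)]
  have key2 : ∀ x : ℝ, (gaussianPDF m' v * fun x => ENNReal.ofReal (rexp (a * x + b))) x
      = ENNReal.ofReal (rexp (b + a * m' + v * a ^ 2 / 2)) *
          ENNReal.ofReal (gaussianPDFReal (m' + v * a) v x) := by
    intro x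
    rw [Pi.mul_apply, gaussianPDF, ← ENNReal.ofReal_mul (gaussianPDFReal_nonneg m' v x),
      ← ENNReal.ofReal_mul (Real.exp_nonneg _)]
    congr 1
    unfold gaussianPDFReal
    have h : rexp (-(x - m') ^ 2 / (2 * v)) * rexp (a * x + b)
        = rexp (b + a * m' + v * a ^ 2 / 2) * rexp (-(x - (m' + v * a)) ^ 2 / (2 * v)) := by
      rw [← Real.exp_add, ← Real.exp_add]
      congr 1
      field_simp
      ring
    rw [mul_assoc ((Real.sqrt (2 * π * (v:ℝ)))⁻¹), h]
    ring
  simp_rw [key2]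
  rw [lintegral_const_mul _ ((measurable_gaussianPDFReal _ _).ennreal_ofReal),
    lintegral_gaussianPDFReal_eq_one _ hv, mul_one]
  congr 1
  rw [Real.exp_eq_exp, ha, hb]
  field_simp
  ring

lemma my_prod_ofReal_exp {ι : Type*} (s : Finset ι) (t : ι → ℝ) :
    ∏ j ∈ s, ENNReal.ofReal (rexp (t j)) = ENNReal.ofReal (rexp (∑ j ∈ s, t j)) := by
  induction s using Finset.cons_induction with
  | empty => simp
  | cons a s ha ih =>
    rw [Finset.prod_cons, Finset.sum_cons, ih, ← ENNReal.ofReal_mul (Real.exp_nonneg _),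
      ← Real.exp_add]

/-- Tight composition of `N` sensitivity-1 Gaussian mechanisms via moments: if for each
`i` we have `‖vᵢ - vᵢ'‖₂ ≤ 1`, `μ` and `ν` are the joint (product) output laws of the
Gaussian mechanisms centered at `vᵢ` and `vᵢ'` with independent `N(0,σ²)` coordinates,
and `exp(N·λ(λ+1)/(2σ²) - λε) ≤ δ`, then `μ` and `ν` are (ε,δ)-indistinguishable. -/
theorem gaussian_composition_moments_dp
    (N : ℕ) (hN : 1 ≤ N) (σ : ℝ) (hσ : 0 < σ)
    (p : Fin N → ℕ) (v v' : ∀ i, Fin (p i) → ℝ)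
    (hsens : ∀ i, Real.sqrt (∑ j, (v i j - v' i j) ^ 2) ≤ 1)
    (lam ε δ : ℝ) (hlam : 0 < lam) (hε : 0 < ε) (hδ : δ ∈ Set.Ioo (0 : ℝ) 1)
    (hcond : Real.exp ((N : ℝ) * (lam * (lam + 1)) / (2 * σ ^ 2) - lam * ε) ≤ δ) :
    ∀ S : Set (∀ i, Fin (p i) → ℝ), MeasurableSet S →
      (Measure.pi fun i => Measure.pi fun j => gaussianReal (v i j) ((σ ^ 2).toNNReal)) S
        ≤ ENNReal.ofReal (Real.exp ε) *
            (Measure.pi fun i => Measure.pi fun j =>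
              gaussianReal (v' i j) ((σ ^ 2).toNNReal)) S
          + ENNReal.ofReal δ := by
  intro S hS
  have hσ2 : (0:ℝ) < σ ^ 2 := by positivity
  set d : ℝ≥0 := (σ ^ 2).toNNReal with hdDef
  have hd : (d : ℝ) = σ ^ 2 := Real.coe_toNNReal _ hσ2.le
  have hd0 : d ≠ 0 := by
    simp only [hdDef, ne_eq, Real.toNNReal_eq_zero, not_le]
    exact hσ2
  have hdpos : (0:ℝ) < (d:ℝ) := by rw [hd]; exact hσ2
  set ν : Measure (∀ i, Fin (p i) → ℝ) :=
    Measure.pi fun i => Measure.pi fun j => gaussianReal (v' i j) d with hν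
  set μ : Measure (∀ i, Fin (p i) → ℝ) :=
    Measure.pi fun i => Measure.pi fun j => gaussianReal (v i j) d with hμdef
  -- the likelihood ratio
  set r : ∀ i, Fin (p i) → ℝ → ℝ≥0∞ := fun i j x =>
    ENNReal.ofReal (rexp (((x - v' i j) ^ 2 - (x - v i j) ^ 2) / (2 * (d:ℝ)))) with hrdef
  have hr : ∀ i j, Measurable (r i j) := by
    intro i j
    exact Measurable.ennreal_ofReal (by fun_prop)
  have hinner : ∀ i, Measure.pi (fun j => gaussianReal (v i j) d)
      = (Measure.pi fun j => gaussianReal (v' i j) d).withDensity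
          (fun y => ∏ j, r i j (y j)) := by
    intro i
    have h1 : Measure.pi (fun j => gaussianReal (v i j) d)
        = Measure.pi (fun j => (gaussianReal (v' i j) d).withDensity (r i j)) :=
      congrArg Measure.pi (funext fun j => my_gaussian_ratio _ _ hd0)
    haveI : ∀ j, SigmaFinite ((gaussianReal (v' i j) d).withDensity (r i j)) := fun j => by
      rw [← my_gaussian_ratio _ _ hd0]; infer_instance
    rw [h1]
    exact my_pi_withDensity _ (fun j => r i j) (fun j => hr i j)
  have hμν : μ = ν.withDensity (fun x => ∏ i, ∏ j, r i j (x i j)) := by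
    have h1 : μ = Measure.pi (fun i =>
        (Measure.pi fun j => gaussianReal (v' i j) d).withDensity
          (fun y => ∏ j, r i j (y j))) := congrArg Measure.pi (funext hinner)
    haveI : ∀ i, SigmaFinite ((Measure.pi fun j => gaussianReal (v' i j) d).withDensity
        (fun y => ∏ j, r i j (y j))) := fun i => by
      rw [← hinner i]; infer_instance
    rw [h1]
    exact my_pi_withDensity _ (fun i (y : Fin (p i) → ℝ) => ∏ j, r i j (y j))
      (fun i => Finset.measurable_prod _ fun j _ => (hr i j).comp (measurable_pi_apply j))
  -- privacy loss
  set g : (∀ i, Fin (p i) → ℝ) → ℝ := fun x =>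
    ∑ i, ∑ j, ((x i j - v' i j) ^ 2 - (x i j - v i j) ^ 2) / (2 * (d:ℝ)) with hgdef
  have hg : Measurable g := by
    apply Finset.measurable_sum
    intro i _
    apply Finset.measurable_sum
    intro j _
    fun_prop
  have hLg : ∀ x, (∏ i, ∏ j, r i j (x i j)) = ENNReal.ofReal (rexp (g x)) := by
    intro x
    simp only [hrdef]
    rw [← my_prod_ofReal_exp]
    exact Finset.prod_congr rfl fun i _ => my_prod_ofReal_exp _ _
  set A : Set (∀ i, Fin (p i) → ℝ) := {x | ε ≤ g x} with hAdef
  have hA : MeasurableSet A := measurableSet_le measurable_const hg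
  -- bound on the good part
  have hgood : μ (S \ A) ≤ ENNReal.ofReal (Real.exp ε) * ν S := by
    rw [hμν, withDensity_apply _ (hS.diff hA)]
    calc ∫⁻ x in S \ A, ∏ i, ∏ j, r i j (x i j) ∂ν
        ≤ ∫⁻ _ in S \ A, ENNReal.ofReal (Real.exp ε) ∂ν := by
          refine setLIntegral_mono measurable_const fun x hx => ?_
          rw [hLg x]
          exact ENNReal.ofReal_le_ofReal (Real.exp_le_exp.mpr (le_of_not_ge hx.2))
      _ = ENNReal.ofReal (Real.exp ε) * ν (S \ A) := setLIntegral_const _ _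
      _ ≤ ENNReal.ofReal (Real.exp ε) * ν S :=
          mul_le_mul_right (measure_mono Set.diff_subset) _
  -- bound on the bad part via moments
  have hsum : ∀ i, ∑ j, (v i j - v' i j) ^ 2 ≤ 1 := by
    intro i
    have h1 := hsens i
    have h2 : (0:ℝ) ≤ ∑ j, (v i j - v' i j) ^ 2 :=
      Finset.sum_nonneg fun j _ => sq_nonneg _
    nlinarith [Real.sq_sqrt h2, Real.sqrt_nonneg (∑ j, (v i j - v' i j) ^ 2)]
  have hmoment : ∫⁻ x, ENNReal.ofReal (rexp ((lam + 1) * g x)) ∂ν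
      = ENNReal.ofReal (rexp (∑ i, ∑ j,
          (lam + 1) * ((lam + 1) - 1) * (v i j - v' i j) ^ 2 / (2 * (d:ℝ)))) := by
    have h1 : ∀ x, (lam + 1) * g x = ∑ i, ∑ j,
        (lam + 1) * ((x i j - v' i j) ^ 2 - (x i j - v i j) ^ 2) / (2 * (d:ℝ)) := by
      intro x
      simp only [hgdef, Finset.mul_sum]
      exact Finset.sum_congr rfl fun i _ => Finset.sum_congr rfl fun j _ =>
        (mul_div_assoc _ _ _).symm
    simp_rw [h1]
    have h2 : ∀ x : ∀ i, Fin (p i) → ℝ, ENNReal.ofReal (rexp (∑ i, ∑ j,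
        (lam + 1) * ((x i j - v' i j) ^ 2 - (x i j - v i j) ^ 2) / (2 * (d:ℝ))))
        = ∏ i, (fun y : Fin (p i) → ℝ => ∏ j, ENNReal.ofReal (rexp (
            (lam + 1) * ((y j - v' i j) ^ 2 - (y j - v i j) ^ 2) / (2 * (d:ℝ))))) (x i) := by
      intro x
      rw [← my_prod_ofReal_exp]
      exact (Finset.prod_congr rfl fun i _ => my_prod_ofReal_exp _ _).symm
    simp_rw [h2]
    calc ∫⁻ x, ∏ i, (fun y : Fin (p i) → ℝ => ∏ j, ENNReal.ofReal (rexp (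
            (lam + 1) * ((y j - v' i j) ^ 2 - (y j - v i j) ^ 2) / (2 * (d:ℝ))))) (x i) ∂ν
        = ∏ i, ∫⁻ y : Fin (p i) → ℝ, ∏ j, ENNReal.ofReal (rexp (
            (lam + 1) * ((y j - v' i j) ^ 2 - (y j - v i j) ^ 2) / (2 * (d:ℝ))))
            ∂(Measure.pi fun j => gaussianReal (v' i j) d) :=
          my_lintegral_pi_prod _ (fun i (y : Fin (p i) → ℝ) => ∏ j, ENNReal.ofReal (rexp (
            (lam + 1) * ((y j - v' i j) ^ 2 - (y j - v i j) ^ 2) / (2 * (d:ℝ)))))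
            (fun i => Finset.measurable_prod _ fun j _ =>
              Measurable.ennreal_ofReal (by fun_prop))
      _ = ∏ i, ∏ j, ∫⁻ t : ℝ, ENNReal.ofReal (rexp (
            (lam + 1) * ((t - v' i j) ^ 2 - (t - v i j) ^ 2) / (2 * (d:ℝ))))
            ∂gaussianReal (v' i j) d :=
          Finset.prod_congr rfl fun i _ =>
            my_lintegral_pi_prod _ (fun j (t : ℝ) => ENNReal.ofReal (rexp (
              (lam + 1) * ((t - v' i j) ^ 2 - (t - v i j) ^ 2) / (2 * (d:ℝ)))))
              (fun j => Measurable.ennreal_ofReal (by fun_prop))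
      _ = ∏ i, ∏ j, ENNReal.ofReal (rexp (
            (lam + 1) * ((lam + 1) - 1) * (v i j - v' i j) ^ 2 / (2 * (d:ℝ)))) :=
          Finset.prod_congr rfl fun i _ => Finset.prod_congr rfl fun j _ =>
            my_gaussian_moment _ _ hd0 _
      _ = ENNReal.ofReal (rexp (∑ i, ∑ j,
            (lam + 1) * ((lam + 1) - 1) * (v i j - v' i j) ^ 2 / (2 * (d:ℝ)))) := by
          rw [← my_prod_ofReal_exp]
          exact Finset.prod_congr rfl fun i _ => my_prod_ofReal_exp _ _
  have hbad : μ A ≤ ENNReal.ofReal δ := by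
    rw [hμν, withDensity_apply _ hA]
    have step1 : ∫⁻ x in A, ∏ i, ∏ j, r i j (x i j) ∂ν
        ≤ ∫⁻ x in A, ENNReal.ofReal (rexp (-(lam * ε))) *
            ENNReal.ofReal (rexp ((lam + 1) * g x)) ∂ν := by
      refine setLIntegral_mono (measurable_const.mul
        (Measurable.ennreal_ofReal (by fun_prop : Measurable fun x => rexp ((lam + 1) * g x)))) fun x hx => ?_
      rw [hLg x, ← ENNReal.ofReal_mul (Real.exp_nonneg _), ← Real.exp_add]
      refine ENNReal.ofReal_le_ofReal (Real.exp_le_exp.mpr ?_)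
      have hxA : ε ≤ g x := hx
      nlinarith
    have step2 : ∫⁻ x in A, ENNReal.ofReal (rexp (-(lam * ε))) *
          ENNReal.ofReal (rexp ((lam + 1) * g x)) ∂ν
        ≤ ENNReal.ofReal (rexp (-(lam * ε))) *
            ∫⁻ x, ENNReal.ofReal (rexp ((lam + 1) * g x)) ∂ν := by
      rw [lintegral_const_mul _ (Measurable.ennreal_ofReal (by fun_prop :
        Measurable fun x => rexp ((lam + 1) * g x)))]
      exact mul_le_mul_right (setLIntegral_le_lintegral _ _) _
    refine le_trans (le_trans step1 step2) ?_
    rw [hmoment, ← ENNReal.ofReal_mul (Real.exp_nonneg _), ← Real.exp_add]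
    refine le_trans (ENNReal.ofReal_le_ofReal (le_trans (Real.exp_le_exp.mpr ?_) hcond)) le_rfl
    -- exponent comparison
    have hterm : ∑ i, ∑ j, (lam + 1) * ((lam + 1) - 1) * (v i j - v' i j) ^ 2 / (2 * (d:ℝ))
        ≤ (N:ℝ) * (lam * (lam + 1)) / (2 * σ ^ 2) := by
      have hK : (0:ℝ) ≤ lam * (lam + 1) / (2 * σ ^ 2) := by positivity
      calc ∑ i, ∑ j, (lam + 1) * ((lam + 1) - 1) * (v i j - v' i j) ^ 2 / (2 * (d:ℝ))
          = ∑ i, (lam * (lam + 1) / (2 * σ ^ 2)) * ∑ j, (v i j - v' i j) ^ 2 := by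
            refine Finset.sum_congr rfl fun i _ => ?_
            rw [Finset.mul_sum]
            refine Finset.sum_congr rfl fun j _ => ?_
            rw [hd]
            ring
        _ ≤ ∑ i, (lam * (lam + 1) / (2 * σ ^ 2)) * 1 :=
            Finset.sum_le_sum fun i _ => mul_le_mul_of_nonneg_left (hsum i) hK
        _ = (N:ℝ) * (lam * (lam + 1)) / (2 * σ ^ 2) := by
            rw [Finset.sum_const, Finset.card_univ, Fintype.card_fin]
            simp only [nsmul_eq_mul, mul_one]
            ring
    linarith
  -- combine
  calc μ S = μ (S ∩ A) + μ (S \ A) := (measure_inter_add_diff S hA).symm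
    _ ≤ μ A + μ (S \ A) := add_le_add (measure_mono Set.inter_subset_right) le_rfl
    _ ≤ ENNReal.ofReal δ + ENNReal.ofReal (Real.exp ε) * ν S := add_le_add hbad hgood
    _ = ENNReal.ofReal (Real.exp ε) * ν S + ENNReal.ofReal δ := add_comm _ _
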